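/- Let φ: (0,∞)ⁿ → ℝ be the barrier function φ(x) = f(x) − μ ∑_i log x_i with μ > 0, and let x have positive entries, d ∈ ℝⁿ, α ∈ (0,1] satisfy x + αd ≥ (1−τ)x componentwise for τ ∈ (0,1). Suppose f is twice continuously differentiable on a convex open set containing the segment [x, x+αd]. Then φ(x + αd) − φ(x) ≤ α ∇φ(x)ᵀd + (α²/2) dᵀ H̆ d + (μ/(1−τ)) α² ‖X⁻¹d‖², for some H̆ = ∇²f(x + ᾰ d) with ᾰ ∈ (0,1). -/

import Mathlib

private lemma log_lb (τ t : ℝ) (hτ : 0 < 1 - τ) (h : 1 - τ ≤ 1 + t) :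
    t - Real.log (1 + t) ≤ t ^ 2 / (1 - τ) := by
  have h0 : 0 < 1 + t := lt_of_lt_of_le hτ h
  have h1 : Real.log (1 + t)⁻¹ ≤ (1 + t)⁻¹ - 1 :=
    Real.log_le_sub_one_of_pos (inv_pos.mpr h0)
  rw [Real.log_inv] at h1
  have h2 : t - Real.log (1 + t) ≤ t ^ 2 / (1 + t) := by
    have : t + ((1 + t)⁻¹ - 1) = t ^ 2 / (1 + t) := by field_simp; ring
    linarith [this]
  have h3 : t ^ 2 / (1 + t) ≤ t ^ 2 / (1 - τ) :=
    div_le_div_of_nonneg_left (sq_nonneg t) hτ h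
  linarith

/-- Second-order Taylor mean-value theorem along a segment. -/
private lemma taylor_seg {n : ℕ} (f : (Fin n → ℝ) → ℝ) (x d : Fin n → ℝ) (α : ℝ)
    (hα0 : 0 < α) (U : Set (Fin n → ℝ)) (hUopen : IsOpen U)
    (hmem : ∀ t ∈ Set.Icc (0:ℝ) α, x + t • d ∈ U)
    (hf : ContDiffOn ℝ 2 f U) :
    ∃ a ∈ Set.Ioo (0:ℝ) α,
      f (x + α • d) - f x =
        α * fderiv ℝ f x d +
          α ^ 2 / 2 * ((fderiv ℝ (fun y => fderiv ℝ f y) (x + a • d) d) d) := by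
  have hf' : ContDiffOn ℝ 1 (fun y => fderiv ℝ f y) U :=
    hf.fderiv_of_isOpen hUopen (by norm_num)
  have hdf : ∀ y ∈ U, HasFDerivAt f (fderiv ℝ f y) y := fun y hy =>
    ((hf.differentiableOn (by norm_num)).differentiableAt
      (hUopen.mem_nhds hy)).hasFDerivAt
  have hdf' : ∀ y ∈ U, HasFDerivAt (fun y => fderiv ℝ f y)
      (fderiv ℝ (fun y => fderiv ℝ f y) y) y := fun y hy =>
    ((hf'.differentiableOn (by norm_num)).differentiableAt
      (hUopen.mem_nhds hy)).hasFDerivAt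
  -- curve and its derivatives
  have hγ : ∀ t : ℝ, HasDerivAt (fun t : ℝ => x + t • d) d t := by
    intro t
    simpa using ((hasDerivAt_id t).smul_const d).const_add x
  set g : ℝ → ℝ := fun t => f (x + t • d) with hg
  set g1 : ℝ → ℝ := fun t => fderiv ℝ f (x + t • d) d with hg1
  set g2 : ℝ → ℝ := fun t => (fderiv ℝ (fun y => fderiv ℝ f y) (x + t • d) d) d with hg2
  have hgd : ∀ t ∈ Set.Icc (0:ℝ) α, HasDerivAt g (g1 t) t := by
    intro t ht
    have := (hdf _ (hmem t ht)).comp_hasDerivAt t (hγ t)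
    exact this
  have hg1d : ∀ t ∈ Set.Icc (0:ℝ) α, HasDerivAt g1 (g2 t) t := by
    intro t ht
    have hc : HasDerivAt (fun t : ℝ => fderiv ℝ f (x + t • d))
        (fderiv ℝ (fun y => fderiv ℝ f y) (x + t • d) d) t :=
      (hdf' _ (hmem t ht)).comp_hasDerivAt t (hγ t)
    have := hc.clm_apply (hasDerivAt_const t d)
    simpa using this
  -- Rolle's trick
  set M : ℝ := (g α - g 0 - α * g1 0) * 2 / α ^ 2 with hM
  set F : ℝ → ℝ := fun t => g α - g t - (α - t) * g1 t - M * (α - t) ^ 2 / 2 with hF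
  have hFd : ∀ t ∈ Set.Icc (0:ℝ) α,
      HasDerivAt F ((α - t) * (M - g2 t)) t := by
    intro t ht
    have h1 := ((hasDerivAt_const t α).sub (hasDerivAt_id t)).mul (hg1d t ht)
    have h2 := ((((hasDerivAt_const t α).sub (hasDerivAt_id t)).pow 2).const_mul M).div_const 2
    have h3 := (((hasDerivAt_const t (g α)).sub (hgd t ht)).sub h1).sub h2
    convert h3 using 1
    · rfl
    · rfl
    · rfl
    · simp only [Pi.sub_apply, id_eq]
      push_cast
      ring
  have hFc : ContinuousOn F (Set.Icc 0 α) := fun t ht =>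
    ((hFd t ht).continuousAt).continuousWithinAt
  have hF0 : F 0 = F α := by
    have hα2 : α ^ 2 ≠ 0 := by positivity
    have : M * α ^ 2 = (g α - g 0 - α * g1 0) * 2 := by
      rw [hM]; field_simp
    simp only [hF]
    nlinarith [this]
  obtain ⟨c, hc, hc0⟩ := exists_hasDerivAt_eq_zero hα0 hFc hF0
    (fun t ht => hFd t (Set.mem_Icc_of_Ioo ht))
  refine ⟨c, hc, ?_⟩
  have hcα : α - c ≠ 0 := by have := hc.2; intro h; linarith [hc.2]
  have hMg : M = g2 c := by
    rcases mul_eq_zero.mp hc0 with h | h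
    · exact absurd h hcα
    · linarith
  have hα2 : α ^ 2 ≠ 0 := by positivity
  have : g α - g 0 - α * g1 0 = M * α ^ 2 / 2 := by
    rw [hM]; field_simp
  have hg0 : g1 0 = fderiv ℝ f x d := by simp [hg1]
  have hgα : g α = f (x + α • d) := rfl
  have hg00 : g 0 = f x := by simp [hg]
  rw [← hgα, ← hg00, ← hg0]
  rw [hMg] at this
  simp only [hg2] at this ⊢
  linarith

theorem stmt_19 (n : ℕ) (f : (Fin n → ℝ) → ℝ) (x d : Fin n → ℝ) (μ τ α : ℝ)
    (hx : ∀ i, 0 < x i) (hμ : 0 < μ) (hτ0 : 0 < τ) (hτ1 : τ < 1)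
    (hα0 : 0 < α) (hα1 : α ≤ 1)
    (hftb : ∀ i, (1 - τ) * x i ≤ x i + α * d i)
    (U : Set (Fin n → ℝ)) (hUopen : IsOpen U) (hUconv : Convex ℝ U)
    (hseg : segment ℝ x (x + α • d) ⊆ U)
    (hf : ContDiffOn ℝ 2 f U) :
    ∃ a ∈ Set.Ioo (0 : ℝ) 1,
      (f (x + α • d) - μ * ∑ i, Real.log (x i + α * d i)) -
          (f x - μ * ∑ i, Real.log (x i)) ≤
        α * (fderiv ℝ f x d - μ * ∑ i, d i / x i) +
        α ^ 2 / 2 * ((fderiv ℝ (fun y => fderiv ℝ f y) (x + a • d) d) d) +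
        (μ / (1 - τ)) * α ^ 2 * ∑ i, (d i / x i) ^ 2 := by
  have hτ : 0 < 1 - τ := by linarith
  have hmem : ∀ t ∈ Set.Icc (0:ℝ) α, x + t • d ∈ U := by
    intro t ht
    apply hseg
    rw [segment_eq_image']
    exact ⟨t / α, ⟨div_nonneg ht.1 hα0.le, by
      rw [div_le_one hα0]; exact ht.2⟩, by
      simp [smul_smul, div_mul_cancel₀, hα0.ne']⟩
  obtain ⟨a, ha, hTaylor⟩ := taylor_seg f x d α hα0 U hUopen hmem hf
  refine ⟨a, ⟨ha.1, lt_of_lt_of_le ha.2 hα1⟩, ?_⟩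
  -- log part
  have hlog : ∀ i, α * (d i / x i) - (Real.log (x i + α * d i) - Real.log (x i)) ≤
      α ^ 2 * (d i / x i) ^ 2 / (1 - τ) := by
    intro i
    set t : ℝ := α * d i / x i with ht
    have hxi := hx i
    have h1 : 1 - τ ≤ 1 + t := by
      rw [ht, show (1:ℝ) + α * d i / x i = (x i + α * d i) / x i by field_simp,
        le_div_iff₀ hxi]
      linarith [hftb i]
    have key := log_lb τ t hτ h1
    have hxt : x i + α * d i = x i * (1 + t) := by
      rw [ht]; field_simp
    have h0t : 0 < 1 + t := lt_of_lt_of_le hτ h1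
    have hlogeq : Real.log (x i + α * d i) = Real.log (x i) + Real.log (1 + t) := by
      rw [hxt, Real.log_mul hxi.ne' h0t.ne']
    have ht' : t = α * (d i / x i) := by rw [ht]; ring
    rw [hlogeq, ht']
    rw [ht']  at key
    rw [show (α * (d i / x i)) ^ 2 = α ^ 2 * (d i / x i) ^ 2 from by ring] at key
    linarith
  have hsum : ∑ i, (α * (d i / x i) - (Real.log (x i + α * d i) - Real.log (x i)))
      ≤ ∑ i, α ^ 2 * (d i / x i) ^ 2 / (1 - τ) :=
    Finset.sum_le_sum fun i _ => hlog i
  rw [Finset.sum_sub_distrib, Finset.sum_sub_distrib, ← Finset.mul_sum] at hsum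
  have hsum2 : ∑ i, α ^ 2 * (d i / x i) ^ 2 / (1 - τ)
      = (1 / (1 - τ)) * α ^ 2 * ∑ i, (d i / x i) ^ 2 := by
    rw [Finset.mul_sum]
    congr 1; ext i; field_simp
  rw [hsum2] at hsum
  have hμ' : μ * (α * ∑ i, d i / x i -
      (∑ i, Real.log (x i + α * d i) - ∑ i, Real.log (x i)))
      ≤ μ * ((1 / (1 - τ)) * α ^ 2 * ∑ i, (d i / x i) ^ 2) :=
    mul_le_mul_of_nonneg_left hsum hμ.le
  have hfin : μ / (1 - τ) * α ^ 2 * ∑ i, (d i / x i) ^ 2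
      = μ * ((1 / (1 - τ)) * α ^ 2 * ∑ i, (d i / x i) ^ 2) := by ring
  rw [hfin]
  nlinarith [hTaylor, hμ']
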